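/- arXiv:1301.4657 — 2 statements merged into one kernel-verified Lean document; each statement's English description precedes it below -/
import Mathlib

section
/- For each integer n ≥ 2, let G be the graph obtained by taking 2n−2 disjoint copies of the complete graph K_{2n−1}, adding one new vertex v, and joining v to exactly two vertices in each copy. Then G is connected, has odd order (2n−2)(2n−1)+1, minimum degree 2n−2, satisfies o(G − S) ≤ 2n·|S| for every nonempty S ⊆ V(G), and G has no spanning subgraph F with d_F(u) ∈ {1,3,...,2n−1,2n} for all vertices u. -/
open SimpleGraph
open Finset

/-- Number of odd-order components of `G - S`. -/
noncomputable def oddComp {V : Type*} [Fintype V] (G : SimpleGraph V) (S : Set V) : ℕ :=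
  Nat.card {c : (G.induce Sᶜ).ConnectedComponent // Odd (Nat.card c.supp)}

/-- Degree of `v` in `F` (no decidability assumptions). -/
noncomputable def ndeg {V : Type*} (F : SimpleGraph V) (v : V) : ℕ :=
  Nat.card (F.neighborSet v)

/-- The base relation for the sharpness example: `2n-2` copies of `K_{2n-1}` plus an
apex vertex joined to exactly the first two vertices of each copy. -/
def sharpRel (n : ℕ) :
    Option (Fin (2 * n - 2) × Fin (2 * n - 1)) →
      Option (Fin (2 * n - 2) × Fin (2 * n - 1)) → Prop
  | some p, some q => p.1 = q.1
  | none, some p => (p.2 : ℕ) < 2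
  | _, _ => False

lemma adj_ss {n : ℕ} {p q} : (fromRel (sharpRel n)).Adj (some p) (some q) ↔ p ≠ q ∧ p.1 = q.1 := by
  simp only [fromRel_adj, sharpRel, ne_eq, Option.some.injEq]
  constructor
  · rintro ⟨h1, h2 | h2⟩ <;> exact ⟨h1, by omega⟩
  · rintro ⟨h1, h2⟩; exact ⟨h1, Or.inl h2⟩

lemma adj_ns {n : ℕ} {p} : (fromRel (sharpRel n)).Adj none (some p) ↔ (p.2 : ℕ) < 2 := by
  simp [fromRel_adj, sharpRel]

lemma adj_sn {n : ℕ} {p} : (fromRel (sharpRel n)).Adj (some p) none ↔ (p.2 : ℕ) < 2 := by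
  rw [adj_comm]; exact adj_ns

lemma sum_lt_two {k : ℕ} (hk : 2 ≤ k) :
    ∑ b : Fin k, (if (b : ℕ) < 2 then 1 else 0) = 2 := by
  rw [Fin.sum_univ_eq_sum_range (fun j => if j < 2 then 1 else 0), ← Finset.card_filter]
  have : (Finset.range k).filter (fun j => j < 2) = Finset.range 2 := by
    ext j; simp only [mem_filter, mem_range]; omega
  rw [this, Finset.card_range]

lemma sum_ne {k : ℕ} (a : Fin k) :
    ∑ b : Fin k, (if b ≠ a then 1 else 0) = k - 1 := by
  rw [← Finset.card_filter]
  have : (Finset.univ.filter (fun b : Fin k => b ≠ a)) = Finset.univ.erase a := by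
    ext b; simp [Finset.mem_erase, and_comm]
  rw [this, Finset.card_erase_of_mem (mem_univ a), Finset.card_univ, Fintype.card_fin]

lemma deg_split {n : ℕ} (F : SimpleGraph (Option (Fin (2*n-2) × Fin (2*n-1))))
    [DecidableRel F.Adj] (x : Option (Fin (2*n-2) × Fin (2*n-1))) :
    F.degree x = (if F.Adj x none then 1 else 0) +
      ∑ q : Fin (2*n-2) × Fin (2*n-1), (if F.Adj x (some q) then 1 else 0) := by
  rw [← card_neighborFinset_eq_degree, neighborFinset_eq_filter, Finset.card_filter,
    Fintype.sum_option]

lemma degG_some_sum {n : ℕ} [DecidableRel (fromRel (sharpRel n)).Adj] (hn : 2 ≤ n) (p : Fin (2*n-2) × Fin (2*n-1)) :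
    ∑ q : Fin (2*n-2) × Fin (2*n-1),
      (if (fromRel (sharpRel n)).Adj (some p) (some q) then 1 else 0) = 2*n-2 := by
  have hs : ∑ q : Fin (2*n-2) × Fin (2*n-1),
      (if (fromRel (sharpRel n)).Adj (some p) (some q) then 1 else 0) = 2*n-2 := by
    rw [Fintype.sum_prod_type]
    rw [Finset.sum_eq_single p.1]
    · have hiff : ∀ b : Fin (2*n-1),
          (fromRel (sharpRel n)).Adj (some p) (some (p.1, b)) ↔ b ≠ p.2 := by
        intro b
        rw [adj_ss]
        constructor
        · rintro ⟨h1, -⟩ hb; exact h1 (by rw [hb])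
        · intro hb; exact ⟨fun hc => hb (congrArg Prod.snd hc).symm, rfl⟩
      rw [Finset.sum_congr rfl (fun b _ => if_congr (hiff b) rfl rfl), sum_ne]
      omega
    · intro i _ hi
      apply Finset.sum_eq_zero
      intro b _
      rw [if_neg]
      rw [adj_ss]
      rintro ⟨-, h2⟩; exact hi h2.symm
    · intro h; exact absurd (Finset.mem_univ _) h
  exact hs

lemma degG_some_lt {n : ℕ} [DecidableRel (fromRel (sharpRel n)).Adj] (hn : 2 ≤ n) (p : Fin (2*n-2) × Fin (2*n-1))
    (h : (p.2 : ℕ) < 2) : (fromRel (sharpRel n)).degree (some p) = 2*n-1 := by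
  rw [deg_split, degG_some_sum hn, if_pos (adj_sn.mpr h)]
  omega

lemma degG_some_ge2 {n : ℕ} [DecidableRel (fromRel (sharpRel n)).Adj] (hn : 2 ≤ n) (p : Fin (2*n-2) × Fin (2*n-1))
    (h : ¬ (p.2 : ℕ) < 2) : (fromRel (sharpRel n)).degree (some p) = 2*n-2 := by
  rw [deg_split, degG_some_sum hn, if_neg (fun hc => h (adj_sn.mp hc))]
  omega

lemma degG_none {n : ℕ} [DecidableRel (fromRel (sharpRel n)).Adj] (hn : 2 ≤ n) :
    (fromRel (sharpRel n)).degree (none : Option (Fin (2*n-2) × Fin (2*n-1))) = (2*n-2)*2 := by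
  rw [deg_split, if_neg (fromRel (sharpRel n)).irrefl]
  rw [Fintype.sum_prod_type]
  have : ∀ i : Fin (2*n-2), ∑ b : Fin (2*n-1),
      (if (fromRel (sharpRel n)).Adj none (some (i, b)) then 1 else 0) = 2 := by
    intro i
    have h2 : ∀ b : Fin (2*n-1),
        (if (fromRel (sharpRel n)).Adj none (some (i, b)) then 1 else 0) =
        (if (b : ℕ) < 2 then 1 else 0) := fun b => if_congr adj_ns rfl rfl
    rw [Finset.sum_congr rfl (fun b _ => h2 b), sum_lt_two (by omega)]
  rw [Finset.sum_congr rfl (fun i _ => this i), Finset.sum_const, Finset.card_univ,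
    Fintype.card_fin, smul_eq_mul, zero_add]


lemma ndeg_eq' {V : Type*} [Fintype V] (F : SimpleGraph V) [DecidableRel F.Adj] (v : V) :
    Nat.card (F.neighborSet v) = F.degree v := by
  rw [Nat.card_eq_card_toFinset]; rfl

lemma odd_sum {α : Type*} (s : Finset α) (f : α → ℕ) (hodd : ∀ a ∈ s, Odd (f a))
    (hcard : Odd s.card) : Odd (∑ a ∈ s, f a) := by
  rw [Nat.odd_iff, Finset.sum_nat_mod]
  have : ∑ a ∈ s, f a % 2 = ∑ a ∈ s, 1 := by
    apply Finset.sum_congr rfl; intro a ha; rw [Nat.odd_iff.mp (hodd a ha)]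
  rw [this, Finset.sum_const, smul_eq_mul, mul_one, ← Nat.odd_iff]; exact hcard

def copyG {n : ℕ} (F : SimpleGraph (Option (Fin (2*n-2) × Fin (2*n-1)))) (i : Fin (2*n-2)) :
    SimpleGraph (Fin (2*n-1)) where
  Adj a b := F.Adj (some (i, a)) (some (i, b))
  symm := ⟨fun a b h => F.adj_symm h⟩
  loopless := ⟨fun a h => F.irrefl h⟩

lemma even_copy {n : ℕ} (F : SimpleGraph (Option (Fin (2*n-2) × Fin (2*n-1))))
    [inst : DecidableRel F.Adj] (i : Fin (2*n-2)) :
    Even (∑ b : Fin (2*n-1), ∑ b' : Fin (2*n-1),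
      (if F.Adj (some (i, b)) (some (i, b')) then 1 else 0)) := by
  haveI : DecidableRel (copyG F i).Adj := fun a b => inst _ _
  have hd : ∀ b, (∑ b' : Fin (2*n-1),
      (if F.Adj (some (i, b)) (some (i, b')) then 1 else 0)) = (copyG F i).degree b := by
    intro b
    rw [← card_neighborFinset_eq_degree, neighborFinset_eq_filter, Finset.card_filter]
    exact Finset.sum_congr rfl (fun b' _ => if_congr Iff.rfl rfl rfl)
  have hsum : (∑ b : Fin (2*n-1), ∑ b' : Fin (2*n-1),
      (if F.Adj (some (i, b)) (some (i, b')) then 1 else 0)) = ∑ b, (copyG F i).degree b :=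
    Finset.sum_congr rfl (fun b _ => hd b)
  rw [hsum, sum_degrees_eq_twice_card_edges]
  exact even_two_mul _

lemma no_factor {n : ℕ} (hn : 2 ≤ n) :
    ¬ ∃ F : SimpleGraph (Option (Fin (2 * n - 2) × Fin (2 * n - 1))),
        F ≤ fromRel (sharpRel n) ∧
        ∀ u, (Odd (Nat.card (F.neighborSet u)) ∧ Nat.card (F.neighborSet u) ≤ 2 * n - 1) ∨
          Nat.card (F.neighborSet u) = 2 * n := by
  classical
  rintro ⟨F, hFG, hdeg⟩
  have hde : ∀ v, Nat.card (F.neighborSet v) = F.degree v := fun v => ndeg_eq' F v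
  -- F-degree of a copy vertex is at most 2n-1
  have hGd : ∀ p, F.degree (some p) ≤ 2 * n - 1 := by
    intro p
    have hsub : F.neighborFinset (some p) ⊆ (fromRel (sharpRel n)).neighborFinset (some p) := by
      intro x hx; rw [mem_neighborFinset] at hx ⊢; exact hFG hx
    have hcard := Finset.card_le_card hsub
    rw [card_neighborFinset_eq_degree, card_neighborFinset_eq_degree] at hcard
    rcases lt_or_ge (p.2 : ℕ) 2 with h | h
    · rw [degG_some_lt hn p h] at hcard; exact hcard
    · rw [degG_some_ge2 hn p (not_lt.mpr h)] at hcard; omega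
  -- F-degree of a copy vertex is odd
  have hodd_deg : ∀ p, Odd (F.degree (some p)) := by
    intro p
    rcases hdeg (some p) with ⟨h, -⟩ | h
    · rwa [hde] at h
    · exfalso; rw [hde] at h; have := hGd p; omega
  -- degree split for copy vertices
  have hF_split : ∀ (i : Fin (2*n-2)) (b : Fin (2*n-1)), F.degree (some (i, b)) =
      (if F.Adj (some (i, b)) none then 1 else 0) +
      ∑ b' : Fin (2*n-1), (if F.Adj (some (i, b)) (some (i, b')) then 1 else 0) := by
    intro i b
    rw [deg_split]
    congr 1
    rw [Fintype.sum_prod_type]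
    rw [Finset.sum_eq_single i]
    · intro i' _ hi'
      apply Finset.sum_eq_zero
      intro b' _
      rw [if_neg]
      intro hadj
      exact hi' ((adj_ss.mp (hFG hadj)).2).symm
    · intro h; exact absurd (Finset.mem_univ _) h
  -- the within-copy degree sum is even (handshake)
  have heven := fun i : Fin (2*n-2) => even_copy F i
  -- each copy sends exactly an odd number (hence exactly one) of F-edges to the apex
  have he_odd : ∀ i : Fin (2*n-2),
      Odd (∑ b : Fin (2*n-1), (if F.Adj none (some (i, b)) then 1 else 0)) := by
    intro i
    have hT : Odd (∑ b : Fin (2*n-1), F.degree (some (i, b))) := by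
      apply odd_sum
      · intro b _; exact hodd_deg (i, b)
      · rw [Finset.card_univ, Fintype.card_fin]; rw [Nat.odd_iff]; omega
    rw [Finset.sum_congr rfl (fun b _ => hF_split i b), Finset.sum_add_distrib] at hT
    have hcomm : ∀ b : Fin (2*n-1), (if F.Adj (some (i, b)) none then 1 else 0) =
        (if F.Adj none (some (i, b)) then 1 else 0) :=
      fun b => if_congr (F.adj_comm _ _) rfl rfl
    rw [Finset.sum_congr rfl (fun b _ => hcomm b)] at hT
    rcases heven i with ⟨t, ht⟩
    rcases hT with ⟨u, hu⟩
    rw [Nat.odd_iff]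
    omega
  have he_le : ∀ i : Fin (2*n-2),
      (∑ b : Fin (2*n-1), (if F.Adj none (some (i, b)) then 1 else 0)) ≤ 2 := by
    intro i
    calc (∑ b : Fin (2*n-1), (if F.Adj none (some (i, b)) then 1 else 0))
        ≤ ∑ b : Fin (2*n-1), (if (b : ℕ) < 2 then 1 else 0) := by
          apply Finset.sum_le_sum
          intro b _
          by_cases h : F.Adj none (some (i, b))
          · rw [if_pos h, if_pos (adj_ns.mp (hFG h))]
          · rw [if_neg h]; exact Nat.zero_le _
      _ = 2 := sum_lt_two (by omega)
  have he1 : ∀ i : Fin (2*n-2),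
      (∑ b : Fin (2*n-1), (if F.Adj none (some (i, b)) then 1 else 0)) = 1 := by
    intro i
    rcases he_odd i with ⟨t, ht⟩
    have := he_le i
    omega
  have hdnone : F.degree (none : Option (Fin (2*n-2) × Fin (2*n-1))) = 2*n-2 := by
    rw [deg_split, if_neg (F.irrefl (v := none)), Fintype.sum_prod_type]
    rw [Finset.sum_congr rfl (fun i _ => he1 i), Finset.sum_const, Finset.card_univ,
      Fintype.card_fin, smul_eq_mul, mul_one, zero_add]
  rcases hdeg none with ⟨h, -⟩ | h <;> rw [hde, hdnone] at h
  · rw [Nat.odd_iff] at h; omega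
  · omega

lemma reach_from_none {n : ℕ} (hn : 2 ≤ n) (v : Option (Fin (2*n-2) × Fin (2*n-1))) :
    (fromRel (sharpRel n)).Reachable none v := by
  match v with
  | none => exact Reachable.refl _
  | some ⟨i, a⟩ =>
    by_cases h : (a : ℕ) < 2
    · exact (adj_ns.mpr h).reachable
    · have h0 : (0 : ℕ) < 2 * n - 1 := by omega
      have h1 : (fromRel (sharpRel n)).Adj none (some (i, ⟨0, h0⟩)) := adj_ns.mpr (by simp)
      have h2 : (fromRel (sharpRel n)).Adj (some (i, (⟨0, h0⟩ : Fin (2*n-1)))) (some (i, a)) := by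
        rw [adj_ss]
        refine ⟨?_, rfl⟩
        intro hc
        have h3 : ((⟨0, h0⟩ : Fin (2*n-1)) : ℕ) = (a : ℕ) :=
          congrArg (fun x : Fin (2*n-2) × Fin (2*n-1) => ((x.2 : ℕ))) hc
        simp at h3
        omega
      exact h1.reachable.trans h2.reachable

lemma sharp_connected {n : ℕ} (hn : 2 ≤ n) : (fromRel (sharpRel n)).Connected := by
  rw [connected_iff]
  refine ⟨fun u v => ((reach_from_none hn u).symm.trans (reach_from_none hn v)), ⟨none⟩⟩

lemma comp_card_le {n : ℕ} (hn : 2 ≤ n) (S : Set (Option (Fin (2*n-2) × Fin (2*n-1)))) :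
    Nat.card (((fromRel (sharpRel n)).induce Sᶜ).ConnectedComponent) ≤ 2 * n - 1 := by
  classical
  set G := fromRel (sharpRel n) with hG
  set G' := G.induce Sᶜ with hG'
  have hfin : Finite G'.ConnectedComponent := Quot.finite _
  have key : ∀ v w : ↥(Sᶜ), Option.map Prod.fst v.1 = Option.map Prod.fst w.1 →
      G'.connectedComponentMk v = G'.connectedComponentMk w := by
    rintro ⟨v1, hv⟩ ⟨w1, hw⟩ hvw
    match v1, hv, w1, hw with
    | none, hv, none, hw => rfl
    | none, hv, some q, hw => simp at hvw
    | some p, hv, none, hw => simp at hvw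
    | some p, hv, some q, hw =>
      simp only [Option.map_some, Option.some.injEq] at hvw
      by_cases hpq : p = q
      · subst hpq; rfl
      · refine ConnectedComponent.sound (Adj.reachable ?_)
        show G.Adj (some p) (some q)
        exact adj_ss.mpr ⟨hpq, hvw⟩
  have h1 : Nat.card G'.ConnectedComponent ≤ Nat.card (Option (Fin (2*n-2))) := by
    apply Nat.card_le_card_of_injective
      (f := fun c : G'.ConnectedComponent => Option.map Prod.fst (Quot.out c).1)
    intro c d hcd
    rw [← Quot.out_eq c, ← Quot.out_eq d]
    exact key _ _ hcd
  have h2 : Nat.card (Option (Fin (2*n-2))) = (2*n-2) + 1 := by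
    simp [Nat.card_eq_fintype_card]
  omega

/-- Sharpness of the minimum-degree bound `2n-1`. -/
theorem stmt_5 (n : ℕ) (hn : 2 ≤ n) :
    let G := SimpleGraph.fromRel (sharpRel n)
    G.Connected ∧
    Fintype.card (Option (Fin (2 * n - 2) × Fin (2 * n - 1))) = (2 * n - 2) * (2 * n - 1) + 1 ∧
    Odd (Fintype.card (Option (Fin (2 * n - 2) × Fin (2 * n - 1)))) ∧
    (∀ v, 2 * n - 2 ≤ ndeg G v) ∧ (∃ v, ndeg G v = 2 * n - 2) ∧
    (∀ S : Finset (Option (Fin (2 * n - 2) × Fin (2 * n - 1))), S.Nonempty →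
      oddComp G (↑S : Set (Option (Fin (2 * n - 2) × Fin (2 * n - 1)))) ≤ 2 * n * S.card) ∧
    ¬ ∃ F : SimpleGraph (Option (Fin (2 * n - 2) × Fin (2 * n - 1))), F ≤ G ∧
        ∀ u, (Odd (ndeg F u) ∧ ndeg F u ≤ 2 * n - 1) ∨ ndeg F u = 2 * n := by
  classical
  intro G
  have hG : G = SimpleGraph.fromRel (sharpRel n) := rfl
  rw [hG]
  have hcard : Fintype.card (Option (Fin (2 * n - 2) × Fin (2 * n - 1))) =
      (2 * n - 2) * (2 * n - 1) + 1 := by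
    simp [Fintype.card_option, Fintype.card_prod, Fintype.card_fin]
  have hnd : ∀ (F : SimpleGraph (Option (Fin (2 * n - 2) × Fin (2 * n - 1)))) v,
      ndeg F v = F.degree v := fun F v => ndeg_eq' F v
  refine ⟨sharp_connected hn, hcard, ?_, ?_, ?_, ?_, ?_⟩
  · rw [hcard]
    have heven : Even ((2 * n - 2) * (2 * n - 1)) :=
      Even.mul_right ⟨n - 1, by omega⟩ _
    exact heven.add_one
  · intro v
    rw [hnd]
    match v with
    | none => rw [@degG_none n (fun _ _ => Classical.propDecidable _) hn]; omega
    | some p =>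
      rcases lt_or_ge (p.2 : ℕ) 2 with h | h
      · rw [@degG_some_lt n (fun _ _ => Classical.propDecidable _) hn p h]; omega
      · rw [@degG_some_ge2 n (fun _ _ => Classical.propDecidable _) hn p (not_lt.mpr h)]
  · refine ⟨some (⟨0, by omega⟩, ⟨2, by omega⟩), ?_⟩
    rw [hnd, @degG_some_ge2 n (fun _ _ => Classical.propDecidable _) hn _ (by simp)]
  · intro S hS
    have h0 : oddComp (SimpleGraph.fromRel (sharpRel n)) (↑S) ≤
        Nat.card (((SimpleGraph.fromRel (sharpRel n)).induce (↑S : Set _)ᶜ).ConnectedComponent) := by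
      haveI : Finite (((SimpleGraph.fromRel (sharpRel n)).induce
          (↑S : Set _)ᶜ).ConnectedComponent) := Quot.finite _
      exact Nat.card_le_card_of_injective Subtype.val Subtype.val_injective
    have h1 := comp_card_le hn (↑S : Set (Option (Fin (2 * n - 2) × Fin (2 * n - 1))))
    have h2 : 1 ≤ S.card := hS.card_pos
    have h3 := Nat.mul_le_mul_left (2 * n) h2
    omega
  · exact no_factor hn
end

section
/- Let n be an odd positive integer and G a finite simple graph on an even number of vertices. If o(G − S) ≤ n·|S| for every S ⊆ V(G) (in particular G has no odd components, taking S = ∅), then G has a spanning subgraph in which every vertex has degree exactly 1, 3, ..., or n; in particular for n = 1 this recovers Tutte's 1-factor theorem: G has a perfect matching iff o(G − S) ≤ |S| for all S. -/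
open SimpleGraph

open Function
namespace Ama
variable {V : Type*}

/-- The spanning subgraph of `G` keeping only edges inside `B`. -/
def del (G : SimpleGraph V) (B : Set V) : SimpleGraph V where
  Adj u v := G.Adj u v ∧ u ∈ B ∧ v ∈ B
  symm := ⟨fun u v ⟨h, hu, hv⟩ => ⟨h.symm, hv, hu⟩⟩
  loopless := ⟨fun v ⟨h, _, _⟩ => G.loopless.irrefl v h⟩

lemma del_adj {G : SimpleGraph V} {B : Set V} {u v} :
    (del G B).Adj u v ↔ G.Adj u v ∧ u ∈ B ∧ v ∈ B := Iff.rfl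

/-- number of odd components of `del G B` living inside `B`. -/
noncomputable def ocIn [Fintype V] (G : SimpleGraph V) (B : Set V) : ℕ :=
  Nat.card {c : (del G B).ConnectedComponent // c.supp ⊆ B ∧ Odd (Nat.card c.supp)}

lemma reach_closed {H K : SimpleGraph V} (P : V → Prop)
    (hP : ∀ u w, P u → H.Adj u w → K.Adj u w ∧ P w) {u v} (hu : P u) (h : H.Reachable u v) :
    K.Reachable u v ∧ P v := by
  obtain ⟨w⟩ := h
  induction w with
  | nil => exact ⟨Reachable.refl _, hu⟩
  | @cons a b c hab p ih =>
      obtain ⟨hK, hPb⟩ := hP a b hu hab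
      obtain ⟨hr, hPc⟩ := ih hPb
      exact ⟨hK.reachable.trans hr, hPc⟩

lemma del_mono {G : SimpleGraph V} {B B' : Set V} (h : B' ⊆ B) : del G B' ≤ del G B :=
  fun _ _ ⟨ha, hu, hv⟩ => ⟨ha, h hu, h hv⟩

lemma mem_of_del_adj {G : SimpleGraph V} {B : Set V} {u v} (h : (del G B).Adj u v) : v ∈ B := h.2.2

/-- reachability from a vertex not in `B` is trivial. -/
lemma reach_isolated {G : SimpleGraph V} {B : Set V} {u v} (hv : v ∉ B)
    (h : (del G B).Reachable v u) : u = v := by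
  obtain ⟨w⟩ := h
  cases w with
  | nil => rfl
  | cons hab p => exact absurd hab.2.1 hv

lemma supp_isolated {G : SimpleGraph V} {B : Set V} {v} (hv : v ∉ B) :
    ((del G B).connectedComponentMk v).supp = {v} := by
  ext u
  simp only [ConnectedComponent.mem_supp_iff, ConnectedComponent.eq, Set.mem_singleton_iff]
  exact ⟨fun h => reach_isolated hv h.symm, fun h => h ▸ Reachable.refl _⟩

lemma supp_subset_of_mem {G : SimpleGraph V} {B : Set V} {c : (del G B).ConnectedComponent}
    {v} (hv : v ∈ c.supp) (hvB : v ∈ B) : c.supp ⊆ B := by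
  intro u hu
  rw [ConnectedComponent.mem_supp_iff] at hu hv
  have : (del G B).Reachable u v := ConnectedComponent.exact (hu.trans hv.symm)
  by_contra huB
  exact huB ((reach_isolated huB this) ▸ hvB)

lemma supp_nonempty {G : SimpleGraph V} (c : G.ConnectedComponent) : c.supp.Nonempty := by
  obtain ⟨v, rfl⟩ := c.exists_rep
  exact ⟨v, rfl⟩

lemma eq_of_mem_supp {G : SimpleGraph V} {c d : G.ConnectedComponent} {v}
    (hc : v ∈ c.supp) (hd : v ∈ d.supp) : c = d := by
  rw [ConnectedComponent.mem_supp_iff] at hc hd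
  exact hc ▸ hd ▸ rfl

section helpers
variable {α : Type*} [Finite α]

lemma card_split (q p : α → Prop) :
    Nat.card {a // q a} = Nat.card {a // q a ∧ p a} + Nat.card {a // q a ∧ ¬ p a} := by
  classical
  rw [← Nat.card_sum]
  refine (Nat.card_congr (Equiv.ofBijective
    (Sum.elim (fun x : {a // q a ∧ p a} => (⟨x.1, x.2.1⟩ : {a // q a}))
      (fun x : {a // q a ∧ ¬ p a} => ⟨x.1, x.2.1⟩)) ⟨?_, ?_⟩)).symm
  · rintro (x | x) (y | y) h <;> simp only [Sum.elim_inl, Sum.elim_inr, Subtype.mk.injEq] at h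
    · exact congrArg _ (Subtype.ext h)
    · exact (y.2.2 (h ▸ x.2.2)).elim
    · exact (x.2.2 (h.symm ▸ y.2.2)).elim
    · exact congrArg _ (Subtype.ext h)
  · rintro ⟨a, ha⟩
    by_cases hp : p a
    · exact ⟨Sum.inl ⟨a, ha, hp⟩, rfl⟩
    · exact ⟨Sum.inr ⟨a, ha, hp⟩, rfl⟩

lemma card_add_le (q1 q2 q : α → Prop) (h1 : ∀ a, q1 a → q a) (h2 : ∀ a, q2 a → q a)
    (hd : ∀ a, q1 a → q2 a → False) :
    Nat.card {a // q1 a} + Nat.card {a // q2 a} ≤ Nat.card {a // q a} := by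
  rw [← Nat.card_sum]
  apply Nat.card_le_card_of_injective
    (Sum.elim (fun x : {a // q1 a} => (⟨x.1, h1 _ x.2⟩ : {a // q a}))
      (fun x : {a // q2 a} => ⟨x.1, h2 _ x.2⟩))
  rintro (x | x) (y | y) h <;> simp only [Sum.elim_inl, Sum.elim_inr, Subtype.mk.injEq] at h
  · exact congrArg _ (Subtype.ext h)
  · exact (hd x.1 x.2 (h.symm ▸ y.2)).elim
  · exact (hd y.1 y.2 (h ▸ x.2)).elim
  · exact congrArg _ (Subtype.ext h)

end helpers

variable [Fintype V] {G : SimpleGraph V}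

lemma card_comp_le {H K : SimpleGraph V} (p : H.ConnectedComponent → Prop)
    (q : K.ConnectedComponent → Prop)
    (h : ∀ c : H.ConnectedComponent, p c → ∃ d : K.ConnectedComponent, q d ∧ d.supp = c.supp) :
    Nat.card {c // p c} ≤ Nat.card {d // q d} := by
  choose f hf1 hf2 using h
  apply Nat.card_le_card_of_injective (fun c : {c // p c} => (⟨f c.1 c.2, hf1 c.1 c.2⟩ : {d // q d}))
  rintro ⟨c, hc⟩ ⟨c', hc'⟩ h
  simp only [Subtype.mk.injEq] at h
  have hs : c.supp = c'.supp := by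
    rw [← hf2 c hc, ← hf2 c' hc', h]
  obtain ⟨v, hv⟩ := supp_nonempty c
  exact Subtype.ext (eq_of_mem_supp hv (hs ▸ hv))

lemma reach_iff {B B' : Set V} (hB : B' ⊆ B)
    (hcl : ∀ u w, u ∈ B' → (del G B).Adj u w → w ∈ B') {v w : V} (hv : v ∈ B') :
    (del G B).Reachable v w ↔ (del G B').Reachable v w := by
  constructor
  · intro h
    exact (reach_closed (H := del G B) (K := del G B') (· ∈ B') (fun u x hu ha =>
      ⟨⟨ha.1, hu, hcl u x hu ha⟩, hcl u x hu ha⟩) hv h).1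
  · exact Reachable.mono (del_mono hB)

lemma supp_transfer {B B' : Set V} (hB : B' ⊆ B)
    (hcl : ∀ u w, u ∈ B' → (del G B).Adj u w → w ∈ B') {v : V} (hv : v ∈ B') :
    ((del G B).connectedComponentMk v).supp = ((del G B').connectedComponentMk v).supp := by
  ext w
  simp only [ConnectedComponent.mem_supp_iff, ConnectedComponent.eq]
  constructor
  · intro h
    exact ((reach_iff hB hcl hv).mp h.symm).symm
  · intro h
    exact ((reach_iff hB hcl hv).mpr h.symm).symm

lemma ocIn_transfer {B B' : Set V} (hB : B' ⊆ B)
    (hcl : ∀ u w, u ∈ B' → (del G B).Adj u w → w ∈ B') :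
    Nat.card {d : (del G B).ConnectedComponent //
      d.supp ⊆ B' ∧ Odd (Nat.card d.supp)} = ocIn G B' := by
  rw [ocIn]
  apply le_antisymm
  · apply card_comp_le
    rintro d ⟨hd1, hd2⟩
    obtain ⟨v, hv⟩ := supp_nonempty d
    have hvB' : v ∈ B' := hd1 hv
    have hsupp : d.supp = ((del G B').connectedComponentMk v).supp := by
      rw [ConnectedComponent.mem_supp_iff] at hv
      rw [← hv, supp_transfer hB hcl hvB']
    refine ⟨(del G B').connectedComponentMk v, ⟨?_, ?_⟩, hsupp.symm⟩
    · rw [← hsupp]; exact hd1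
    · rw [← hsupp]; exact hd2
  · apply card_comp_le
    rintro c ⟨hc1, hc2⟩
    obtain ⟨v, hv⟩ := supp_nonempty c
    have hvB' : v ∈ B' := hc1 hv
    have hsupp : c.supp = ((del G B).connectedComponentMk v).supp := by
      rw [ConnectedComponent.mem_supp_iff] at hv
      rw [← hv, supp_transfer hB hcl hvB']
    refine ⟨(del G B).connectedComponentMk v, ⟨?_, ?_⟩, hsupp.symm⟩
    · rw [← hsupp]; exact hc1
    · rw [← hsupp]; exact hc2

lemma ocIn_parity (G : SimpleGraph V) (B : Set V) :
    ocIn G B % 2 = Nat.card B % 2 := by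
  classical
  have key : Odd (Nat.card V) ↔ Odd (Nat.card ↑{c : (del G B).ConnectedComponent | Odd (Nat.card c.supp)}) := by
    simpa only [Nat.card_coe_set_eq] using (odd_ncard_oddComponents (G := del G B)).symm
  have hsplit := card_split (α := (del G B).ConnectedComponent)
    (fun c => Odd (Nat.card c.supp)) (fun c => c.supp ⊆ B)
  have hout : Nat.card ↥(Bᶜ) = Nat.card {c : (del G B).ConnectedComponent //
      Odd (Nat.card c.supp) ∧ ¬ c.supp ⊆ B} := by
    apply Nat.card_congr
    refine Equiv.ofBijective (fun x => ⟨(del G B).connectedComponentMk x.1, ?_, ?_⟩) ⟨?_, ?_⟩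
    · rw [supp_isolated x.2]; simp
    · rw [supp_isolated x.2]; intro h; exact x.2 (h rfl)
    · rintro ⟨v, hv⟩ ⟨v', hv'⟩ h
      simp only [Subtype.mk.injEq] at h
      have : v' ∈ ((del G B).connectedComponentMk v).supp := by
        rw [h]; exact rfl
      rw [supp_isolated hv, Set.mem_singleton_iff] at this
      exact Subtype.ext this.symm
    · rintro ⟨c, hodd, hns⟩
      obtain ⟨w, hw, hwB⟩ := Set.not_subset.mp hns
      exact ⟨⟨w, hwB⟩, Subtype.ext hw⟩
  have hoc : ocIn G B = Nat.card {c : (del G B).ConnectedComponent //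
      Odd (Nat.card c.supp) ∧ c.supp ⊆ B} :=
    Nat.card_congr (Equiv.subtypeEquivRight (fun c => and_comm))
  have hcompl : Nat.card B + Nat.card ↥(Bᶜ) = Fintype.card V := by
    simp only [Nat.card_coe_set_eq]
    rw [Set.ncard_add_ncard_compl]
    exact Nat.card_eq_fintype_card
  rw [Nat.card_eq_fintype_card] at key
  rw [show Nat.card ↑{c : (del G B).ConnectedComponent | Odd (Nat.card c.supp)}
      = Nat.card {c : (del G B).ConnectedComponent // Odd (Nat.card c.supp)} from rfl] at key
  rw [Nat.odd_iff, Nat.odd_iff] at key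
  omega
lemma mem_supp_self {H : SimpleGraph V} (v : V) : v ∈ (H.connectedComponentMk v).supp :=
  (ConnectedComponent.mem_supp_iff _ _).mpr rfl

lemma supp_closed {H : SimpleGraph V} {c : H.ConnectedComponent} {u w}
    (hu : u ∈ c.supp) (h : H.Adj u w) : w ∈ c.supp := by
  rw [ConnectedComponent.mem_supp_iff] at hu ⊢
  rw [← hu]
  exact ConnectedComponent.eq.mpr h.symm.reachable

/-- a component whose support is closed in a second region is also a component there -/
lemma comp_push {B₁ B₂ : Set V} {c : (del G B₁).ConnectedComponent}
    (hsub1 : c.supp ⊆ B₁) (hsub : c.supp ⊆ B₂)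
    (hcl : ∀ u w, u ∈ c.supp → (del G B₂).Adj u w → w ∈ c.supp) :
    ∃ d : (del G B₂).ConnectedComponent, d.supp = c.supp := by
  obtain ⟨v, hv⟩ := supp_nonempty c
  refine ⟨(del G B₂).connectedComponentMk v, ?_⟩
  have hc : c = (del G B₁).connectedComponentMk v :=
    ((ConnectedComponent.mem_supp_iff _ _).mp hv).symm
  have h1 : ((del G B₂).connectedComponentMk v).supp
      = ((del G c.supp).connectedComponentMk v).supp :=
    supp_transfer hsub hcl hv
  have h2 : ((del G B₁).connectedComponentMk v).supp
      = ((del G c.supp).connectedComponentMk v).supp :=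
    supp_transfer hsub1 (fun u w hu ha => supp_closed hu ha) hv
  rw [h1, ← h2, ← hc]

theorem tutteRec (G : SimpleGraph V) :
    ∀ (k : ℕ) (A : Set V), A.ncard ≤ k →
    (∀ S : Set V, S ⊆ A → ocIn G (A \ S) ≤ S.ncard) →
    ∃ m : V → V, Involutive m ∧ (∀ v ∈ A, G.Adj v (m v) ∧ m v ∈ A) ∧ (∀ v ∉ A, m v = v) := by
  intro k
  induction k using Nat.strong_induction_on with
  | _ k IH =>
  intro A hcard hcond
  classical
  rcases A.eq_empty_or_nonempty with rfl | hA
  · exact ⟨id, fun v => rfl, by simp, fun v _ => rfl⟩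
  have hAk : 1 ≤ A.ncard := (Set.ncard_pos (Set.toFinite A)).mpr hA
  -- a maximal tight set
  obtain ⟨S, hStight, hSmax⟩ : ∃ S : Finset V, (↑S ⊆ A ∧ ocIn G (A \ ↑S) = S.card) ∧
      ∀ T : Finset V, (↑T ⊆ A ∧ ocIn G (A \ ↑T) = T.card) → T.card ≤ S.card := by
    have hempty : ((∅ : Finset V) : Set V) ⊆ A ∧ ocIn G (A \ ↑(∅ : Finset V)) = (∅ : Finset V).card := by
      constructor
      · simp
      · simp only [Finset.coe_empty, Set.diff_empty, Finset.card_empty]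
        have := hcond ∅ (Set.empty_subset A)
        simpa using this
    obtain ⟨S, hS, hmax⟩ := Finset.exists_max_image
      (Finset.univ.filter (fun T : Finset V => ↑T ⊆ A ∧ ocIn G (A \ ↑T) = T.card))
      Finset.card ⟨∅, by simpa using hempty⟩
    rw [Finset.mem_filter] at hS
    exact ⟨S, hS.2, fun T hT => hmax T (Finset.mem_filter.mpr ⟨Finset.mem_univ _, hT⟩)⟩
  obtain ⟨hSsub, hStt⟩ := hStight
  set A' : Set V := A \ ↑S with hA'def
  have hA'sub : A' ⊆ A := Set.diff_subset
  -- STEP0 : all components inside A' are odd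
  have hodd : ∀ c : (del G A').ConnectedComponent, c.supp ⊆ A' → Odd (Nat.card c.supp) := by
    intro c hc
    by_contra hc'
    obtain ⟨x, hx⟩ := supp_nonempty c
    have hxA' : x ∈ A' := hc hx
    have hxS : x ∉ S := fun h => hxA'.2 h
    set S' : Finset V := insert x S with hS'def
    have hS'card : S'.card = S.card + 1 := Finset.card_insert_of_notMem hxS
    have hS'sub : (↑S' : Set V) ⊆ A := by
      rw [hS'def, Finset.coe_insert]
      exact Set.insert_subset hxA'.1 hSsub
    have hreg : A \ ↑S' = A' \ {x} := by
      rw [hS'def, Finset.coe_insert, hA'def]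
      ext y; simp only [Set.mem_diff, Set.mem_insert_iff, Set.mem_singleton_iff,
        Finset.coe_insert]; tauto
    -- parity piece
    have hnc : Nat.card c.supp = c.supp.ncard := Nat.card_coe_set_eq _
    have hsupp_pos : 1 ≤ c.supp.ncard := (Set.ncard_pos (Set.toFinite _)).mpr (supp_nonempty c)
    have hp := ocIn_parity G (c.supp \ {x})
    rw [Nat.card_coe_set_eq, Set.ncard_diff_singleton_of_mem hx] at hp
    have hocpos : 1 ≤ ocIn G (c.supp \ {x}) := by
      rw [hnc, Nat.odd_iff] at hc'
      omega
    -- injections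
    set q : (del G (A \ ↑S')).ConnectedComponent → Prop :=
      fun e => e.supp ⊆ A \ ↑S' ∧ Odd (Nat.card e.supp) with hq
    set q1 : (del G (A \ ↑S')).ConnectedComponent → Prop :=
      fun e => q e ∧ Disjoint e.supp c.supp with hq1
    set q2 : (del G (A \ ↑S')).ConnectedComponent → Prop :=
      fun e => q e ∧ e.supp ⊆ c.supp \ {x} with hq2
    have hb1 : Nat.card {d : (del G A').ConnectedComponent //
        d.supp ⊆ A' ∧ Odd (Nat.card d.supp)} ≤ Nat.card {e // q1 e} := by
      apply card_comp_le
      rintro d ⟨hd1, hd2⟩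
      have hdc : d ≠ c := fun h => hc' (h ▸ hd2)
      have hdisj : Disjoint d.supp c.supp :=
        pairwise_disjoint_supp_connectedComponent _ hdc
      have hsub : d.supp ⊆ A \ ↑S' := by
        rw [hreg]
        intro v hv
        exact ⟨hd1 hv, fun hvx => (Set.disjoint_left.mp hdisj hv) (hvx ▸ hx)⟩
      obtain ⟨e, he⟩ := comp_push (G := G) hd1 hsub (fun u w hu ha => by
        have hwA' : w ∈ A' := hreg ▸ ha.2.2 |>.1
        exact supp_closed hu ⟨ha.1, hd1 hu, hwA'⟩)
      exact ⟨e, ⟨⟨he ▸ hsub, he ▸ hd2⟩, he ▸ hdisj⟩, he⟩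
    have hb2 : ocIn G (c.supp \ {x}) ≤ Nat.card {e // q2 e} := by
      rw [ocIn]
      apply card_comp_le
      rintro e' ⟨he1, he2⟩
      have hcx_sub : c.supp \ {x} ⊆ A \ ↑S' := by
        rw [hreg]
        exact Set.diff_subset_diff_left hc
      obtain ⟨e, he⟩ := comp_push (G := G) he1 (he1.trans hcx_sub) (fun u w hu ha => by
        have hwA' : w ∈ A' := (hreg ▸ ha.2.2).1
        have hwx : w ≠ x := fun hwx => (hreg ▸ ha.2.2).2 (hwx ▸ rfl)
        have huc : u ∈ c.supp := (he1 hu).1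
        have hwc : w ∈ c.supp := supp_closed huc ⟨ha.1, hc huc, hwA'⟩
        exact supp_closed hu ⟨ha.1, he1 hu, ⟨hwc, hwx⟩⟩)
      exact ⟨e, ⟨⟨he ▸ (he1.trans hcx_sub), he ▸ he2⟩, he ▸ he1⟩, he⟩
    have hdisj12 : ∀ e, q1 e → q2 e → False := by
      rintro e ⟨_, hd⟩ ⟨_, hs⟩
      obtain ⟨v, hv⟩ := supp_nonempty e
      exact Set.disjoint_left.mp hd hv (hs hv).1
    have hsum := card_add_le q1 q2 q (fun e h => h.1) (fun e h => h.1) hdisj12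
    have hlow : S.card + 1 ≤ ocIn G (A \ ↑S') := by
      have h1 : ocIn G A' = Nat.card {d : (del G A').ConnectedComponent //
          d.supp ⊆ A' ∧ Odd (Nat.card d.supp)} := rfl
      have h2 : ocIn G (A \ ↑S') = Nat.card {e // q e} := rfl
      rw [hStt] at h1
      omega
    have htight' : ocIn G (A \ ↑S') = S'.card := by
      have := hcond ↑S' hS'sub
      rw [Set.ncard_coe_finset] at this
      omega
    have := hSmax S' ⟨hS'sub, htight'⟩
    omega
  -- the components inside A'
  set ι : Type _ := {c : (del G A').ConnectedComponent // c.supp ⊆ A'} with hι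
  have hcards : Nat.card ι = S.card := by
    have h1 : Nat.card ι = Nat.card {c : (del G A').ConnectedComponent //
        c.supp ⊆ A' ∧ Odd (Nat.card c.supp)} :=
      Nat.card_congr (Equiv.subtypeEquivRight (fun c =>
        ⟨fun h => ⟨h, hodd c h⟩, fun h => h.1⟩))
    rw [h1, ← hStt]
    rfl
  -- Hall system
  set t : ι → Finset V := fun c => S.filter (fun s => ∃ w ∈ c.1.supp, G.Adj s w) with ht
  have hHall : ∀ 𝒮 : Finset ι, 𝒮.card ≤ (𝒮.biUnion t).card := by
    intro 𝒮
    set N := 𝒮.biUnion t with hN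
    have hNS : N ⊆ S := Finset.biUnion_subset.mpr (fun c _ => Finset.filter_subset _ _)
    have hNsub : (↑N : Set V) ⊆ A := fun v hv => hSsub (hNS hv)
    have hkey : 𝒮.card ≤ ocIn G (A \ ↑N) := by
      have hpush : ∀ c : ι, c ∈ 𝒮 → ∃ e : (del G (A \ ↑N)).ConnectedComponent,
          (e.supp ⊆ A \ ↑N ∧ Odd (Nat.card e.supp)) ∧ e.supp = c.1.supp := by
        intro c hc𝒮
        have hsub : c.1.supp ⊆ A \ ↑N := by
          intro v hv
          exact ⟨hA'sub (c.2 hv), fun hvN => (c.2 hv).2 (hNS hvN)⟩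
        obtain ⟨e, he⟩ := comp_push (G := G) c.2 hsub (fun u w hu ha => by
          by_cases hwS : w ∈ S
          · exfalso
            have h1 : w ∈ t c := Finset.mem_filter.mpr ⟨hwS, ⟨u, hu, ha.1.symm⟩⟩
            exact ha.2.2.2 (Finset.mem_biUnion.mpr ⟨c, hc𝒮, h1⟩)
          · exact supp_closed hu ⟨ha.1, c.2 hu, ⟨ha.2.2.1, hwS⟩⟩)
        exact ⟨e, ⟨he ▸ hsub, he ▸ hodd c.1 c.2⟩, he⟩
      choose F hF1 hF2 using hpush
      have hle : Nat.card {x // x ∈ 𝒮} ≤ Nat.card {e : (del G (A \ ↑N)).ConnectedComponent //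
          e.supp ⊆ A \ ↑N ∧ Odd (Nat.card e.supp)} := by
        apply Nat.card_le_card_of_injective (fun x => ⟨F x.1 x.2, hF1 x.1 x.2⟩)
        rintro ⟨c, hc⟩ ⟨c', hc'⟩ h
        simp only [Subtype.mk.injEq] at h
        have hs : c.1.supp = c'.1.supp := by
          rw [← hF2 c hc, ← hF2 c' hc', h]
        obtain ⟨v, hv⟩ := supp_nonempty c.1
        exact Subtype.ext (Subtype.ext (eq_of_mem_supp hv (hs ▸ hv)))
      calc 𝒮.card = Nat.card {x // x ∈ 𝒮} := by
                rw [Nat.card_eq_fintype_card, Fintype.card_coe]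
        _ ≤ _ := hle
        _ = ocIn G (A \ ↑N) := rfl
    have hc2 := hcond ↑N hNsub
    rw [Set.ncard_coe_finset] at hc2
    omega
  obtain ⟨f, hfinj, hft⟩ := (Finset.all_card_le_biUnion_card_iff_exists_injective t).mp hHall
  have hfS : ∀ c, f c ∈ S := fun c => (Finset.mem_filter.mp (hft c)).1
  have hfadj : ∀ c : ι, ∃ w ∈ c.1.supp, G.Adj (f c) w :=
    fun c => (Finset.mem_filter.mp (hft c)).2
  choose xc hxc1 hxc2 using hfadj
  set f' : ι → {x // x ∈ S} := fun c => ⟨f c, hfS c⟩ with hf'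
  have hbij : Function.Bijective f' := by
    rw [Nat.bijective_iff_injective_and_card]
    refine ⟨fun c c' h => hfinj (congrArg Subtype.val h), ?_⟩
    rw [hcards, Nat.card_eq_fintype_card, Fintype.card_coe]
  set g := (Equiv.ofBijective f' hbij).symm with hg
  have hgf : ∀ s, f' (g s) = s := fun s => (Equiv.ofBijective f' hbij).apply_symm_apply s
  have hfg : ∀ c, g (f' c) = c := fun c => (Equiv.ofBijective f' hbij).symm_apply_apply c
  set R : ι → Set V := fun c => c.1.supp \ {xc c} with hR
  have hxcS : ∀ c : ι, xc c ∉ S := fun c => fun h => (c.2 (hxc1 c)).2 h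
  -- the recursion condition on each piece
  have hcond_c : ∀ c : ι, ∀ T : Set V, T ⊆ R c → ocIn G (R c \ T) ≤ T.ncard := by
    intro c T hT
    by_contra hcon
    push_neg at hcon
    have hTfin : T.Finite := Set.toFinite T
    have haodd : Odd c.1.supp.ncard := by
      rw [← Nat.card_coe_set_eq]; exact hodd c.1 c.2
    have hxmem := hxc1 c
    have hTsub2 : T ⊆ c.1.supp := hT.trans Set.diff_subset
    have hxT : xc c ∉ T := fun h => (hT h).2 rfl
    have hRnc : (R c).ncard = c.1.supp.ncard - 1 := by
      rw [hR]; exact Set.ncard_diff_singleton_of_mem hxmem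
    have hTle : T.ncard ≤ (R c).ncard := Set.ncard_le_ncard hT (Set.toFinite _)
    have hRT : (R c \ T).ncard = c.1.supp.ncard - 1 - T.ncard := by
      rw [Set.ncard_diff hT (Set.toFinite _), hRnc]
    have hparity := ocIn_parity G (R c \ T)
    rw [Nat.card_coe_set_eq, hRT] at hparity
    have hsupp_pos : 1 ≤ c.1.supp.ncard := (Set.ncard_pos (Set.toFinite _)).mpr (supp_nonempty _)
    have h2 : T.ncard + 2 ≤ ocIn G (R c \ T) := by
      rw [Nat.odd_iff] at haodd; omega
    -- the bigger tight set
    set X : Set V := insert (xc c) T with hX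
    have hXsub : X ⊆ c.1.supp := Set.insert_subset hxmem hTsub2
    have hRX : R c \ T = c.1.supp \ X := by
      rw [hR, hX]; ext y
      simp only [Set.mem_diff, Set.mem_insert_iff, Set.mem_singleton_iff]; tauto
    set S' : Finset V := S ∪ insert (xc c) hTfin.toFinset with hS'def
    have hcoeS' : (↑S' : Set V) = ↑S ∪ X := by
      rw [hS'def, Finset.coe_union, Finset.coe_insert, hTfin.coe_toFinset, hX]
    have hS'card : S'.card = S.card + T.ncard + 1 := by
      rw [hS'def, Finset.card_union_of_disjoint, Finset.card_insert_of_notMem,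
        Set.ncard_eq_toFinset_card T hTfin]
      · ring
      · rw [Set.Finite.mem_toFinset]; exact hxT
      · rw [Finset.disjoint_right]
        intro a ha
        rw [Finset.mem_insert, Set.Finite.mem_toFinset] at ha
        rcases ha with rfl | ha
        · exact hxcS c
        · exact fun haS => ((c.2 (hTsub2 ha)).2 haS)
    have hS'sub : (↑S' : Set V) ⊆ A := by
      rw [hcoeS']
      exact Set.union_subset hSsub (fun v hv => hA'sub (c.2 (hXsub hv)))
    have hreg : A \ ↑S' = A' \ X := by
      rw [hcoeS', hA'def]
      ext y
      simp only [Set.mem_diff, Set.mem_union]; tauto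
    -- counting
    set q : (del G (A \ ↑S')).ConnectedComponent → Prop :=
      fun e => e.supp ⊆ A \ ↑S' ∧ Odd (Nat.card e.supp) with hq
    set q1 : (del G (A \ ↑S')).ConnectedComponent → Prop :=
      fun e => q e ∧ Disjoint e.supp c.1.supp with hq1
    set q2 : (del G (A \ ↑S')).ConnectedComponent → Prop :=
      fun e => q e ∧ e.supp ⊆ c.1.supp \ X with hq2
    have hb1 : Nat.card {d : (del G A').ConnectedComponent //
        (d.supp ⊆ A' ∧ Odd (Nat.card d.supp)) ∧ ¬ d = c.1} ≤ Nat.card {e // q1 e} := by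
      apply card_comp_le
      rintro d ⟨⟨hd1, hd2⟩, hdc⟩
      have hdisj : Disjoint d.supp c.1.supp :=
        pairwise_disjoint_supp_connectedComponent _ hdc
      have hsub : d.supp ⊆ A \ ↑S' := by
        rw [hreg]
        intro v hv
        exact ⟨hd1 hv, fun hvX => (Set.disjoint_left.mp hdisj hv) (hXsub hvX)⟩
      obtain ⟨e, he⟩ := comp_push (G := G) hd1 hsub (fun u w hu ha => by
        have hwA' : w ∈ A' := (hreg ▸ ha.2.2).1
        exact supp_closed hu ⟨ha.1, hd1 hu, hwA'⟩)
      exact ⟨e, ⟨⟨he ▸ hsub, he ▸ hd2⟩, he ▸ hdisj⟩, he⟩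
    have hb2 : ocIn G (c.1.supp \ X) ≤ Nat.card {e // q2 e} := by
      rw [ocIn]
      apply card_comp_le
      rintro e' ⟨he1, he2⟩
      have hcx_sub : c.1.supp \ X ⊆ A \ ↑S' := by
        rw [hreg]
        exact Set.diff_subset_diff_left c.2
      obtain ⟨e, he⟩ := comp_push (G := G) he1 (he1.trans hcx_sub) (fun u w hu ha => by
        have hwA' : w ∈ A' := (hreg ▸ ha.2.2).1
        have hwX : w ∉ X := (hreg ▸ ha.2.2).2
        have huc : u ∈ c.1.supp := (he1 hu).1
        have hwc : w ∈ c.1.supp := supp_closed huc ⟨ha.1, c.2 huc, hwA'⟩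
        exact supp_closed hu ⟨ha.1, he1 hu, ⟨hwc, hwX⟩⟩)
      exact ⟨e, ⟨⟨he ▸ (he1.trans hcx_sub), he ▸ he2⟩, he ▸ he1⟩, he⟩
    have hdisj12 : ∀ e, q1 e → q2 e → False := by
      rintro e ⟨_, hd⟩ ⟨_, hs⟩
      obtain ⟨v, hv⟩ := supp_nonempty e
      exact Set.disjoint_left.mp hd hv (hs hv).1
    have hsum := card_add_le q1 q2 q (fun e h => h.1) (fun e h => h.1) hdisj12
    have hsplit := card_split (α := (del G A').ConnectedComponent)
      (fun d => d.supp ⊆ A' ∧ Odd (Nat.card d.supp)) (fun d => d = c.1)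
    have hone : Nat.card {d : (del G A').ConnectedComponent //
        (d.supp ⊆ A' ∧ Odd (Nat.card d.supp)) ∧ d = c.1} = 1 := by
      rw [Nat.card_eq_one_iff_unique]
      constructor
      · exact ⟨fun a b => Subtype.ext (a.2.2.trans b.2.2.symm)⟩
      · exact ⟨⟨c.1, ⟨c.2, hodd c.1 c.2⟩, rfl⟩⟩
    have hSvalue : ocIn G A' = S.card := hStt
    have h1 : ocIn G A' = Nat.card {d : (del G A').ConnectedComponent //
        d.supp ⊆ A' ∧ Odd (Nat.card d.supp)} := rfl
    have h2' : ocIn G (A \ ↑S') = Nat.card {e // q e} := rfl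
    have h3 : ocIn G (R c \ T) = ocIn G (c.1.supp \ X) := by rw [hRX]
    have hup := hcond ↑S' hS'sub
    rw [Set.ncard_coe_finset] at hup
    have htight' : ocIn G (A \ ↑S') = S'.card := by omega
    have := hSmax S' ⟨hS'sub, htight'⟩
    omega
  -- recursion
  have hrec : ∀ c : ι, ∃ mm : V → V, Involutive mm ∧
      (∀ v ∈ R c, G.Adj v (mm v) ∧ mm v ∈ R c) ∧ (∀ v ∉ R c, mm v = v) := by
    intro c
    have hk1 : k - 1 < k := by omega
    apply IH (k - 1) hk1
    · have h1 : c.1.supp.ncard ≤ A.ncard :=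
        Set.ncard_le_ncard (c.2.trans hA'sub) (Set.toFinite _)
      have h2 : (R c).ncard = c.1.supp.ncard - 1 := by
        rw [hR]; exact Set.ncard_diff_singleton_of_mem (hxc1 c)
      omega
    · exact hcond_c c
  choose mc hmc1 hmc2 hmc3 using hrec
  -- assembly
  set m : V → V := fun v =>
    if hS : v ∈ S then xc (g ⟨v, hS⟩)
    else if hC : ∃ c : ι, v ∈ c.1.supp then
      (if v = xc hC.choose then ↑(f' hC.choose) else mc hC.choose v)
    else v with hm
  have huniq : ∀ (c : ι) v, v ∈ c.1.supp → ∀ h : ∃ c' : ι, v ∈ c'.1.supp, h.choose = c :=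
    fun c v hv h => Subtype.ext (eq_of_mem_supp h.choose_spec hv)
  have hsuppS : ∀ (c : ι) v, v ∈ c.1.supp → v ∉ S := fun c v hv h => (c.2 hv).2 h
  have hm2 : ∀ (c : ι) v, v ∈ c.1.supp →
      m v = if v = xc c then ↑(f' c) else mc c v := by
    intro c v hv
    have hvS := hsuppS c v hv
    have hC : ∃ c' : ι, v ∈ c'.1.supp := ⟨c, hv⟩
    rw [hm]
    simp only [dif_neg hvS, dif_pos hC, huniq c v hv hC]
  have hm1 : ∀ v (hv : v ∈ S), m v = xc (g ⟨v, hv⟩) := by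
    intro v hv; rw [hm]; simp only [dif_pos hv]
  have hm3 : ∀ v, v ∉ A → m v = v := by
    intro v hv
    have hvS : v ∉ S := fun h => hv (hSsub h)
    have hC : ¬ ∃ c : ι, v ∈ c.1.supp := by
      rintro ⟨c, hc⟩; exact hv (hA'sub (c.2 hc))
    rw [hm]; simp only [dif_neg hvS, dif_neg hC]
  have hmcmem : ∀ (c : ι) v, v ∈ R c → mc c v ∈ c.1.supp ∧ mc c v ≠ xc c := by
    intro c v hv
    have := (hmc2 c v hv).2
    exact ⟨this.1, fun h => this.2 (h ▸ rfl)⟩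
  -- the three properties
  refine ⟨m, ?_, ?_, hm3⟩
  · -- involutive
    intro v
    by_cases hvS : v ∈ S
    · rw [hm1 v hvS]
      set c₀ := g ⟨v, hvS⟩ with hc₀
      rw [hm2 c₀ (xc c₀) (hxc1 c₀), if_pos rfl]
      have := hgf ⟨v, hvS⟩
      rw [hc₀, this]
    · by_cases hC : ∃ c : ι, v ∈ c.1.supp
      · obtain ⟨c, hv⟩ := hC
        by_cases hx : v = xc c
        · rw [hm2 c v hv, if_pos hx]
          have hfS' : (↑(f' c) : V) ∈ S := (f' c).2
          rw [hm1 _ hfS']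
          have he : (⟨↑(f' c), hfS'⟩ : {x // x ∈ S}) = f' c := Subtype.ext rfl
          rw [he, hfg c, hx]
        · have hvR : v ∈ R c := ⟨hv, hx⟩
          rw [hm2 c v hv, if_neg hx]
          obtain ⟨hw1, hw2⟩ := hmcmem c v hvR
          rw [hm2 c (mc c v) hw1, if_neg hw2]
          exact hmc1 c v
      · have hvA : v ∉ A := by
          intro hvA
          have hvA' : v ∈ A' := ⟨hvA, hvS⟩
          exact hC ⟨⟨_, supp_subset_of_mem (mem_supp_self v) hvA'⟩, mem_supp_self v⟩
        rw [hm3 v hvA, hm3 v hvA]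
  · -- adjacency and membership
    intro v hvA
    by_cases hvS : v ∈ S
    · rw [hm1 v hvS]
      set c₀ := g ⟨v, hvS⟩ with hc₀
      have hfv : f c₀ = v := congrArg Subtype.val (hgf ⟨v, hvS⟩)
      refine ⟨?_, hA'sub (c₀.2 (hxc1 c₀))⟩
      rw [← hfv]
      exact hxc2 c₀
    · have hvA' : v ∈ A' := ⟨hvA, hvS⟩
      have hι : ∃ c : ι, v ∈ c.1.supp :=
        ⟨⟨_, supp_subset_of_mem (mem_supp_self v) hvA'⟩, mem_supp_self v⟩
      obtain ⟨c, hv⟩ := hι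
      by_cases hx : v = xc c
      · rw [hm2 c v hv, if_pos hx]
        refine ⟨?_, hSsub (f' c).2⟩
        have : G.Adj (f c) (xc c) := hxc2 c
        rw [hx]
        exact this.symm
      · have hvR : v ∈ R c := ⟨hv, hx⟩
        rw [hm2 c v hv, if_neg hx]
        exact ⟨(hmc2 c v hvR).1, hA'sub (c.2 (hmc2 c v hvR).2.1)⟩
theorem tutte (G : SimpleGraph V)
    (hcond : ∀ S : Finset V, ocIn G (Set.univ \ ↑S) ≤ S.card) :
    ∃ m : V → V, Involutive m ∧ ∀ v, G.Adj v (m v) := by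
  classical
  obtain ⟨m, h1, h2, _⟩ := tutteRec G (Fintype.card V) Set.univ
    (by rw [Set.ncard_univ, Nat.card_eq_fintype_card])
    (by
      intro S _
      have := hcond (Set.toFinite S).toFinset
      rw [Set.Finite.coe_toFinset] at this
      rwa [Set.ncard_eq_toFinset_card S (Set.toFinite S)])
  exact ⟨m, h1, fun v => (h2 v trivial).1⟩

/-- the bridge between `oddComp` (defined via `induce`) and `ocIn`. -/
lemma del_reach_lift {G : SimpleGraph V} {B : Set V} {u v : V} (w : (del G B).Walk u v) :
    ∀ (hu : u ∈ B) (hv : v ∈ B), (G.induce B).Reachable ⟨u, hu⟩ ⟨v, hv⟩ := by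
  induction w with
  | nil => intro hu hv; exact Reachable.refl _
  | @cons a b c hab p ih =>
      intro hu hv
      have hb : b ∈ B := hab.2.2
      have h1 : (G.induce B).Adj ⟨a, hu⟩ ⟨b, hb⟩ := hab.1
      exact h1.reachable.trans (ih hb hv)

def delHom {G : SimpleGraph V} {B : Set V} : G.induce B →g del G B where
  toFun := Subtype.val
  map_rel' := fun {a b} h => ⟨h, a.2, b.2⟩

lemma oddComp_eq_ocIn (G : SimpleGraph V) (S : Set V) : oddComp G S = ocIn G Sᶜ := by
  classical
  rw [oddComp, ocIn]
  have hsupp : ∀ c : (G.induce Sᶜ).ConnectedComponent,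
      (c.map delHom).supp = Subtype.val '' c.supp := by
    intro c
    obtain ⟨a, ha⟩ := supp_nonempty c
    have hc : (G.induce Sᶜ).connectedComponentMk a = c :=
      (ConnectedComponent.mem_supp_iff _ _).mp ha
    ext x
    rw [← hc, ConnectedComponent.map_mk]
    simp only [Set.mem_image]
    constructor
    · intro h
      rw [ConnectedComponent.mem_supp_iff, ConnectedComponent.eq] at h
      have hx : x ∈ Sᶜ := by
        by_contra hx
        exact hx ((reach_isolated (G := G) hx h) ▸ a.2)
      obtain ⟨wk⟩ := h
      refine ⟨⟨x, hx⟩, ?_, rfl⟩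
      rw [ConnectedComponent.mem_supp_iff, ConnectedComponent.eq]
      exact del_reach_lift wk hx a.2
    · rintro ⟨y, hy, rfl⟩
      rw [ConnectedComponent.mem_supp_iff, ConnectedComponent.eq] at hy ⊢
      exact hy.map delHom
  apply Nat.card_congr
  refine Equiv.ofBijective (fun c => ⟨c.1.map delHom, ?_, ?_⟩) ⟨?_, ?_⟩
  · rw [hsupp c.1]; rintro x ⟨y, _, rfl⟩; exact y.2
  · rw [hsupp c.1, Nat.card_coe_set_eq,
      Set.ncard_image_of_injective _ Subtype.val_injective, ← Nat.card_coe_set_eq]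
    exact c.2
  · rintro ⟨c, hc⟩ ⟨c', hc'⟩ h
    simp only [Subtype.mk.injEq] at h
    have : Subtype.val '' c.supp = Subtype.val '' c'.supp := by
      rw [← hsupp c, ← hsupp c', h]
    have hss : c.supp = c'.supp := Set.image_injective.mpr Subtype.val_injective this
    obtain ⟨v, hv⟩ := supp_nonempty c
    exact Subtype.ext (eq_of_mem_supp hv (hss ▸ hv))
  · rintro ⟨D, hD1, hD2⟩
    obtain ⟨v, hv⟩ := D.exists_rep
    have hvS : v ∈ Sᶜ := hD1 (hv ▸ mem_supp_self v)
    have hmap : ((G.induce Sᶜ).connectedComponentMk ⟨v, hvS⟩).map delHom = D := by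
      rw [ConnectedComponent.map_mk]
      exact hv
    refine ⟨⟨(G.induce Sᶜ).connectedComponentMk ⟨v, hvS⟩, ?_⟩, ?_⟩
    · have hD2' : Odd (Nat.card
          (((G.induce Sᶜ).connectedComponentMk ⟨v, hvS⟩).map delHom).supp) := by
        rw [hmap]; exact hD2
      rwa [hsupp, Nat.card_coe_set_eq,
        Set.ncard_image_of_injective _ Subtype.val_injective, ← Nat.card_coe_set_eq] at hD2'
    · exact Subtype.ext hmap

/-- a finset admitting a fixed-point-free involution has even cardinality -/
lemma even_card_of_invol {α : Type*} [DecidableEq α] :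
    ∀ (k : ℕ) (s : Finset α) (_ : s.card ≤ k) (σ : α → α)
    (_ : ∀ a ∈ s, σ a ∈ s ∧ σ a ≠ a ∧ σ (σ a) = a), Even s.card := by
  intro k
  induction k with
  | zero =>
      intro s hs σ _
      simp [Finset.card_eq_zero.mp (Nat.le_zero.mp hs)]
  | succ k IH =>
      intro s hs σ hσ
      rcases s.eq_empty_or_nonempty with rfl | ⟨a, ha⟩
      · simp
      obtain ⟨hσa, hne, hinv⟩ := hσ a ha
      set s' := s \ {a, σ a} with hs'
      have hcard : s'.card = s.card - 2 := by
        rw [hs', Finset.card_sdiff_of_subset (by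
          intro x hx
          rw [Finset.mem_insert, Finset.mem_singleton] at hx
          rcases hx with rfl | rfl
          exacts [ha, hσa])]
        rw [Finset.card_insert_of_notMem (by simp [Ne.symm hne]), Finset.card_singleton]
      have hs'le : s'.card ≤ k := by
        have h2 : 2 ≤ s.card := by
          have := Finset.one_lt_card.mpr ⟨a, ha, σ a, hσa, Ne.symm hne⟩
          omega
        omega
      have hstep : ∀ b ∈ s', σ b ∈ s' ∧ σ b ≠ b ∧ σ (σ b) = b := by
        intro b hb
        rw [hs', Finset.mem_sdiff, Finset.mem_insert, Finset.mem_singleton] at hb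
        obtain ⟨hbs, hbne⟩ := hb
        push_neg at hbne
        obtain ⟨hσb, hσne, hσinv⟩ := hσ b hbs
        refine ⟨?_, hσne, hσinv⟩
        rw [hs', Finset.mem_sdiff, Finset.mem_insert, Finset.mem_singleton]
        refine ⟨hσb, fun h => ?_⟩
        rcases h with h | h
        · exact hbne.2 (by rw [← h, hσinv])
        · exact hbne.1 (by rw [← hinv, ← h, hσinv])
      have := IH s' hs'le σ hstep
      have h2 : 2 ≤ s.card := by
        have := Finset.one_lt_card.mpr ⟨a, ha, σ a, hσa, Ne.symm hne⟩
        omega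
      obtain ⟨t, hts⟩ := this
      refine ⟨t + 1, by omega⟩
lemma card_or_le {α : Type*} [Finite α] (p1 p2 : α → Prop) :
    Nat.card {a // p1 a ∨ p2 a} ≤ Nat.card {a // p1 a} + Nat.card {a // p2 a} := by
  classical
  have h := card_split (fun a => p1 a ∨ p2 a) p1
  have h1 : Nat.card {a // (p1 a ∨ p2 a) ∧ p1 a} ≤ Nat.card {a // p1 a} :=
    Nat.card_le_card_of_injective (fun x => ⟨x.1, x.2.2⟩)
      (by rintro x y hxy; simp only [Subtype.mk.injEq] at hxy; exact Subtype.ext hxy)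
  have h2 : Nat.card {a // (p1 a ∨ p2 a) ∧ ¬ p1 a} ≤ Nat.card {a // p2 a} :=
    Nat.card_le_card_of_injective (fun x => ⟨x.1, x.2.1.resolve_left x.2.2⟩)
      (by rintro x y hxy; simp only [Subtype.mk.injEq] at hxy; exact Subtype.ext hxy)
  omega

/-- The blown-up graph on `V × Fin n`: copies of each vertex form a clique, and copies of
adjacent vertices are all adjacent. -/
def gad (G : SimpleGraph V) (n : ℕ) : SimpleGraph (V × Fin n) where
  Adj p q := (p.1 = q.1 ∧ p.2 ≠ q.2) ∨ G.Adj p.1 q.1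
  symm := by
    constructor
    rintro p q (⟨h1, h2⟩ | h)
    · exact Or.inl ⟨h1.symm, h2.symm⟩
    · exact Or.inr h.symm
  loopless := by
    constructor
    rintro p (⟨_, h⟩ | h)
    · exact h rfl
    · exact G.loopless.irrefl _ h

set_option maxHeartbeats 1600000 in
lemma gad_cond [Fintype V] (G : SimpleGraph V) (n : ℕ) (hn : Odd n) (hpos : 0 < n)
    (hcond : ∀ S : Finset V, oddComp G (↑S : Set V) ≤ n * S.card) :
    ∀ T : Finset (V × Fin n), ocIn (gad G n) (Set.univ \ ↑T) ≤ T.card := by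
  classical
  intro T
  rw [← Set.compl_eq_univ_diff]
  set H := gad G n with hH
  set Tc : Set (V × Fin n) := (↑T)ᶜ with hTcdef
  set S : Finset V := Finset.univ.filter (fun v => ∀ i, (v, i) ∈ T) with hSdef
  set Sc : Set V := (↑S)ᶜ with hScdef
  have hmemS : ∀ v : V, v ∈ S ↔ ∀ i, (v, i) ∈ T := by
    intro v; rw [hSdef, Finset.mem_filter]; simp
  have hTcS : ∀ p : V × Fin n, p ∈ Tc → p.1 ∈ Sc := by
    intro p hp h
    exact hp ((hmemS p.1).mp h p.2)
  have hsurv : ∀ v : V, v ∈ Sc → ∃ i, (v, i) ∈ Tc := by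
    intro v hv
    by_contra h
    push_neg at h
    refine hv ((hmemS v).mpr (fun i => ?_))
    have := h i
    rw [hTcdef, Set.mem_compl_iff, not_not] at this
    exact this
  -- projection of components
  have hdesc : ∀ p q, (del H Tc).Adj p q →
      (del G Sc).connectedComponentMk p.1 = (del G Sc).connectedComponentMk q.1 := by
    rintro p q ⟨(⟨h1, _⟩ | h1), hp, hq⟩
    · rw [h1]
    · exact ConnectedComponent.eq.mpr (SimpleGraph.Adj.reachable
        ⟨h1, hTcS p hp, hTcS q hq⟩)
  have hwalkconst : ∀ {p q : V × Fin n}, (del H Tc).Walk p q →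
      (del G Sc).connectedComponentMk p.1 = (del G Sc).connectedComponentMk q.1 := by
    intro p q w
    induction w with
    | nil => rfl
    | cons h w ih => exact (hdesc _ _ h).trans ih
  set ψ : (del H Tc).ConnectedComponent → (del G Sc).ConnectedComponent :=
    ConnectedComponent.lift (fun p => (del G Sc).connectedComponentMk p.1)
      (fun p q w _ => hwalkconst w) with hψdef
  have hψmk : ∀ p, ψ ((del H Tc).connectedComponentMk p) = (del G Sc).connectedComponentMk p.1 :=
    fun p => rfl
  -- surviving copies of a connected region are connected
  have hK1 : ∀ {v w : V}, (del G Sc).Reachable v w →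
      ∀ i j, (v, i) ∈ Tc → (w, j) ∈ Tc → (del H Tc).Reachable (v, i) (w, j) := by
    intro v w hr
    obtain ⟨wk⟩ := hr
    induction wk with
    | nil =>
        intro i j hi hj
        by_cases hij : i = j
        · rw [hij]
        · exact SimpleGraph.Adj.reachable ⟨Or.inl ⟨rfl, hij⟩, hi, hj⟩
    | @cons a b c hab wk ih =>
        intro i j hi hj
        obtain ⟨k, hk⟩ := hsurv b hab.2.2
        have h1 : (del H Tc).Reachable (a, i) (b, k) :=
          SimpleGraph.Adj.reachable ⟨Or.inr hab.1, hi, hk⟩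
        exact h1.trans (ih k j hk hj)
  -- support description
  have hK2 : ∀ c : (del H Tc).ConnectedComponent, c.supp ⊆ Tc →
      c.supp = {p | p.1 ∈ (ψ c).supp ∧ p ∈ Tc} := by
    intro c hc
    obtain ⟨q, hq⟩ := supp_nonempty c
    have hqc : (del H Tc).connectedComponentMk q = c := (ConnectedComponent.mem_supp_iff _ _).mp hq
    have hqT : q ∈ Tc := hc hq
    ext p
    simp only [Set.mem_setOf_eq]
    constructor
    · intro hp
      refine ⟨?_, hc hp⟩
      rw [ConnectedComponent.mem_supp_iff, ← ((ConnectedComponent.mem_supp_iff _ _).mp hp), hψmk]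
    · rintro ⟨hp1, hp2⟩
      rw [ConnectedComponent.mem_supp_iff] at hp1 ⊢
      rw [← hqc, hψmk] at hp1
      have hreach : (del G Sc).Reachable p.1 q.1 := ConnectedComponent.exact hp1
      have := hK1 hreach p.2 q.2 hp2 hqT
      rw [← hqc]
      exact ConnectedComponent.eq.mpr (by simpa using this)
  have hψsub : ∀ c : (del H Tc).ConnectedComponent, c.supp ⊆ Tc → (ψ c).supp ⊆ Sc := by
    intro c hc
    obtain ⟨q, hq⟩ := supp_nonempty c
    have hqc : (del H Tc).connectedComponentMk q = c := (ConnectedComponent.mem_supp_iff _ _).mp hq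
    have h1 : q.1 ∈ (ψ c).supp := by
      rw [ConnectedComponent.mem_supp_iff, ← hqc, hψmk]
    exact supp_subset_of_mem h1 (hTcS q (hc hq))
  -- size formula
  have hK5 : ∀ c : (del H Tc).ConnectedComponent, c.supp ⊆ Tc →
      Nat.card c.supp = n * (ψ c).supp.ncard - (T.filter (fun p => p.1 ∈ (ψ c).supp)).card := by
    intro c hc
    set D := ψ c with hD
    set Ds : Finset V := (Set.toFinite D.supp).toFinset with hDs
    have hsetEq : c.supp = ↑((Ds ×ˢ Finset.univ) \ T) := by
      rw [hK2 c hc]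
      ext p
      simp only [Set.mem_setOf_eq, Finset.coe_sdiff, Set.mem_diff, Finset.coe_product,
        Set.mem_prod, Finset.coe_univ, Set.mem_univ, and_true, hDs, Set.Finite.coe_toFinset]
      rw [hTcdef]
      simp only [Set.mem_compl_iff, Finset.mem_coe]
      exact Iff.rfl
    have hTsub : T.filter (fun p => p.1 ∈ D.supp) ⊆ Ds ×ˢ Finset.univ := by
      intro p hp
      rw [Finset.mem_filter] at hp
      rw [Finset.mem_product]
      exact ⟨by rw [hDs, Set.Finite.mem_toFinset]; exact hp.2, Finset.mem_univ _⟩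
    have hinter : (Ds ×ˢ Finset.univ) \ T = (Ds ×ˢ Finset.univ) \ (T.filter (fun p => p.1 ∈ D.supp)) := by
      ext p
      simp only [Finset.mem_sdiff, Finset.mem_filter, Finset.mem_product, Finset.mem_univ,
        and_true, hDs, Set.Finite.mem_toFinset]
      tauto
    have hDscard : D.supp.ncard = Ds.card := by
      rw [hDs, Set.ncard_eq_toFinset_card _ (Set.toFinite D.supp)]
    rw [hsetEq, Nat.card_coe_set_eq, Set.ncard_coe_finset, hinter,
      Finset.card_sdiff_of_subset hTsub, Finset.card_product, Finset.card_univ, Fintype.card_fin,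
      hDscard, mul_comm Ds.card n]
  -- final counting
  set P1 : (del G Sc).ConnectedComponent → Prop := fun D =>
    (D.supp ⊆ Sc ∧ Odd (Nat.card D.supp)) ∧ (T.filter (fun p => p.1 ∈ D.supp)).card = 0 with hP1
  set P2 : (del G Sc).ConnectedComponent → Prop := fun D =>
    D.supp ⊆ Sc ∧ 0 < (T.filter (fun p => p.1 ∈ D.supp)).card with hP2
  have hprop : ∀ c : (del H Tc).ConnectedComponent, c.supp ⊆ Tc → Odd (Nat.card c.supp) →
      P1 (ψ c) ∨ P2 (ψ c) := by
    intro c hc hodd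
    rcases Nat.eq_zero_or_pos (T.filter (fun p => p.1 ∈ (ψ c).supp)).card with h0 | hpos'
    · left
      refine ⟨⟨hψsub c hc, ?_⟩, h0⟩
      have := hK5 c hc
      rw [h0, Nat.sub_zero] at this
      rw [this] at hodd
      rw [Nat.card_coe_set_eq]
      exact ((Nat.odd_mul.mp hodd).2)
    · exact Or.inr ⟨hψsub c hc, hpos'⟩
  have hmap : ocIn H Tc ≤ Nat.card {D // P1 D ∨ P2 D} := by
    rw [ocIn]
    apply Nat.card_le_card_of_injective
      (fun c : {c : (del H Tc).ConnectedComponent // c.supp ⊆ Tc ∧ Odd (Nat.card c.supp)} =>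
        (⟨ψ c.1, hprop c.1 c.2.1 c.2.2⟩ : {D // P1 D ∨ P2 D}))
    rintro ⟨c, hc1, hc2⟩ ⟨c', hc1', hc2'⟩ h
    simp only [Subtype.mk.injEq] at h
    have hs : c.supp = c'.supp := by
      rw [hK2 c hc1, hK2 c' hc1', h]
    obtain ⟨p, hp⟩ := supp_nonempty c
    exact Subtype.ext (eq_of_mem_supp hp (hs ▸ hp))
  have hcard1 : Nat.card {D // P1 D} ≤ n * S.card := by
    have h1 : Nat.card {D // P1 D} ≤ Nat.card {D : (del G Sc).ConnectedComponent //
        D.supp ⊆ Sc ∧ Odd (Nat.card D.supp)} :=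
      Nat.card_le_card_of_injective (fun x => ⟨x.1, x.2.1⟩)
        (by rintro x y hxy; simp only [Subtype.mk.injEq] at hxy; exact Subtype.ext hxy)
    have h2 : oddComp G (↑S : Set V) = ocIn G Sc := oddComp_eq_ocIn G ↑S
    have h3 := hcond S
    have h4 : ocIn G Sc = Nat.card {D : (del G Sc).ConnectedComponent //
        D.supp ⊆ Sc ∧ Odd (Nat.card D.supp)} := rfl
    omega
  have hcard2 : Nat.card {D // P2 D} ≤ (T.filter (fun p => ¬ p.1 ∈ S)).card := by
    have hpick : ∀ D : (del G Sc).ConnectedComponent, P2 D →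
        ∃ p, p ∈ T ∧ p.1 ∈ D.supp := by
      intro D hD
      obtain ⟨p, hp⟩ := Finset.card_pos.mp hD.2
      rw [Finset.mem_filter] at hp
      exact ⟨p, hp.1, hp.2⟩
    choose pick hpk1 hpk2 using hpick
    have hle : Nat.card {D // P2 D} ≤ Nat.card {p // p ∈ T.filter (fun p => ¬ p.1 ∈ S)} := by
      apply Nat.card_le_card_of_injective (fun x : {D // P2 D} =>
        (⟨pick x.1 x.2, by
          rw [Finset.mem_filter]
          refine ⟨hpk1 x.1 x.2, ?_⟩
          have := x.2.1 (hpk2 x.1 x.2)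
          exact this⟩ : {p // p ∈ T.filter (fun p => ¬ p.1 ∈ S)}))
      rintro ⟨D, hD⟩ ⟨D', hD'⟩ h
      simp only [Subtype.mk.injEq] at h
      exact Subtype.ext (eq_of_mem_supp (hpk2 D hD) (h ▸ hpk2 D' hD'))
    rwa [Nat.card_eq_finsetCard] at hle
  have hsplitT : (T.filter (fun p => p.1 ∈ S)).card + (T.filter (fun p => ¬ p.1 ∈ S)).card
      = T.card := Finset.card_filter_add_card_filter_not (p := fun p : V × Fin n => p.1 ∈ S)
  have hfull : (T.filter (fun p => p.1 ∈ S)).card = n * S.card := by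
    have heq : T.filter (fun p => p.1 ∈ S) = S ×ˢ (Finset.univ : Finset (Fin n)) := by
      ext p
      simp only [Finset.mem_filter, Finset.mem_product, Finset.mem_univ, and_true]
      exact ⟨fun h => h.2, fun h => ⟨(hmemS p.1).mp h p.2, h⟩⟩
    rw [heq, Finset.card_product, Finset.card_univ, Fintype.card_fin, mul_comm]
  have hor := card_or_le P1 P2
  omega

end Ama

open Ama in
/-- Amahashi's theorem (sufficiency, even order): if `o(G-S) ≤ n|S|` for all `S`, then `G`
has a `(1,n)`-odd factor; for `n = 1` this is Tutte's perfect matching theorem. -/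
theorem stmt_13 {V : Type*} [Fintype V] (G : SimpleGraph V) (n : ℕ) (hn : Odd n)
    (hpos : 0 < n) (heven : Even (Fintype.card V))
    (hcond : ∀ S : Finset V, oddComp G (↑S : Set V) ≤ n * S.card) :
    ∃ F : SimpleGraph V, F ≤ G ∧ ∀ v : V, Odd (ndeg F v) ∧ ndeg F v ≤ n := by
  classical
  obtain ⟨mH, hinv, hadj⟩ := tutte (gad G n) (gad_cond G n hn hpos hcond)
  have hne : ∀ p, mH p ≠ p := by
    intro p h
    have := hadj p
    rw [h] at this
    exact (gad G n).loopless.irrefl p this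
  -- the multiplicity function
  set μ : V → V → ℕ := fun u v => (Finset.univ.filter (fun i : Fin n => (mH (u, i)).1 = v)).card
    with hμ
  have hpair : ∀ (u : V) (i : Fin n) (v : V), (mH (u, i)).1 = v → mH (u, i) = (v, (mH (u, i)).2) :=
    fun u i v h => Prod.ext_iff.mpr ⟨h, rfl⟩
  have hμsymm : ∀ u v : V, μ u v = μ v u := by
    intro u v
    apply Finset.card_bij (fun i _ => (mH (u, i)).2)
    · intro i hi
      rw [Finset.mem_filter] at hi ⊢
      refine ⟨Finset.mem_univ _, ?_⟩
      have h1 : mH (v, (mH (u, i)).2) = (u, i) := by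
        rw [← hpair u i v hi.2]
        exact hinv (u, i)
      rw [h1]
    · intro i hi i' hi' h
      rw [Finset.mem_filter] at hi hi'
      have : mH (u, i) = mH (u, i') := by
        rw [hpair u i v hi.2, hpair u i' v hi'.2, h]
      have h2 : (u, i) = (u, i') := by
        rw [← hinv (u, i), ← hinv (u, i'), this]
      exact (Prod.ext_iff.mp h2).2
    · intro j hj
      rw [Finset.mem_filter] at hj
      have h1 : mH (u, (mH (v, j)).2) = (v, j) := by
        rw [← hpair v j u hj.2]
        exact hinv (v, j)
      refine ⟨(mH (v, j)).2, ?_, ?_⟩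
      · rw [Finset.mem_filter]
        exact ⟨Finset.mem_univ _, by rw [h1]⟩
      · rw [h1]
  -- the factor
  set F : SimpleGraph V := {
    Adj := fun u v => u ≠ v ∧ Odd (μ u v)
    symm := by
      constructor
      rintro u v ⟨h1, h2⟩
      exact ⟨h1.symm, (hμsymm v u) ▸ h2⟩
    loopless := ⟨fun v h => h.1 rfl⟩ } with hF
  have hFG : F ≤ G := by
    rintro u v ⟨h1, h2⟩
    obtain ⟨i, hi⟩ : ∃ i, (mH (u, i)).1 = v := by
      by_contra h
      push_neg at h
      have : μ u v = 0 := Finset.card_eq_zero.mpr (Finset.filter_eq_empty_iff.mpr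
        (fun i _ => h i))
      rw [this] at h2
      exact (Nat.not_odd_iff_even.mpr Even.zero) h2
    have := hadj (u, i)
    rcases this with ⟨hsame, _⟩ | hcross
    · exact absurd (hsame.trans hi) h1
    · exact hi ▸ hcross
  refine ⟨F, hFG, ?_⟩
  intro v
  -- degree computation
  have hdeg : ndeg F v = (Finset.univ.filter (fun u => v ≠ u ∧ Odd (μ v u))).card := by
    rw [ndeg, neighborSet]
    rw [Nat.card_coe_set_eq, Set.ncard_eq_toFinset_card', Set.toFinset_setOf]
  -- parity of cross-matched copies
  have hinternal : Even ((Finset.univ.filter (fun i : Fin n => (mH (v, i)).1 = v)).card) := by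
    apply even_card_of_invol ((Finset.univ.filter (fun i : Fin n => (mH (v, i)).1 = v)).card)
      _ le_rfl (fun i => (mH (v, i)).2)
    intro i hi
    rw [Finset.mem_filter] at hi
    have h1 : mH (v, (mH (v, i)).2) = (v, i) := by
      rw [← hpair v i v hi.2]
      exact hinv (v, i)
    refine ⟨?_, ?_, ?_⟩
    · rw [Finset.mem_filter]
      exact ⟨Finset.mem_univ _, by rw [h1]⟩
    · intro h
      have : mH (v, i) = (v, i) := by rw [hpair v i v hi.2, h]
      exact hne (v, i) this
    · rw [h1]
  have hA : (Finset.univ.filter (fun i : Fin n => ¬ (mH (v, i)).1 = v)).card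
      + (Finset.univ.filter (fun i : Fin n => (mH (v, i)).1 = v)).card = n := by
    have h0 : ((Finset.univ : Finset (Fin n)).filter (fun i => (mH (v, i)).1 = v)).card
        + ((Finset.univ : Finset (Fin n)).filter (fun i => ¬ (mH (v, i)).1 = v)).card
        = (Finset.univ : Finset (Fin n)).card :=
      Finset.card_filter_add_card_filter_not (p := fun i => (mH (v, i)).1 = v)
    rw [Finset.card_univ, Fintype.card_fin] at h0
    omega
  have hAodd : Odd (Finset.univ.filter (fun i : Fin n => ¬ (mH (v, i)).1 = v)).card := by
    obtain ⟨a, ha⟩ := hinternal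
    obtain ⟨b, hb⟩ := hn
    exact ⟨b - a, by omega⟩
  -- fiber decomposition
  have hfiber : ∑ u ∈ Finset.univ.filter (fun u => ¬ u = v), μ v u
      = (Finset.univ.filter (fun i : Fin n => ¬ (mH (v, i)).1 = v)).card := by
    rw [Finset.card_eq_sum_card_fiberwise (f := fun i => (mH (v, i)).1)
      (t := Finset.univ.filter (fun u => ¬ u = v))
      (fun i hi => by
        rw [Finset.mem_coe, Finset.mem_filter] at hi ⊢
        exact ⟨Finset.mem_univ _, hi.2⟩)]
    apply Finset.sum_congr rfl
    intro u hu
    rw [Finset.mem_filter] at hu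
    have hflt : (Finset.univ.filter (fun i : Fin n => ¬ (mH (v, i)).1 = v)).filter
        (fun i => (mH (v, i)).1 = u) = Finset.univ.filter (fun i : Fin n => (mH (v, i)).1 = u) := by
      ext i
      simp only [Finset.mem_filter, Finset.mem_univ, true_and]
      constructor
      · exact fun h => h.2
      · intro h
        exact ⟨fun hv => hu.2 (by rw [← h, hv]), h⟩
    simp only [hμ]
    rw [hflt]
  have hodd_card : Odd (Finset.univ.filter (fun u => v ≠ u ∧ Odd (μ v u))).card := by
    have h1 := (Finset.odd_sum_iff_odd_card_odd
      (s := Finset.univ.filter (fun u => ¬ u = v)) (fun u => μ v u)).mp (hfiber ▸ hAodd)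
    rw [Finset.filter_filter] at h1
    have heq : Finset.univ.filter (fun u => ¬ u = v ∧ Odd (μ v u))
        = Finset.univ.filter (fun u => v ≠ u ∧ Odd (μ v u)) := by
      ext u
      simp only [Finset.mem_filter, Finset.mem_univ, true_and]
      constructor
      · exact fun h => ⟨fun hv => h.1 hv.symm, h.2⟩
      · exact fun h => ⟨fun hv => h.1 hv.symm, h.2⟩
    rw [← heq]
    exact h1
  constructor
  · rw [hdeg]; exact hodd_card
  · rw [hdeg]
    calc (Finset.univ.filter (fun u => v ≠ u ∧ Odd (μ v u))).card
        = ∑ u ∈ Finset.univ.filter (fun u => v ≠ u ∧ Odd (μ v u)), 1 := by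
          rw [Finset.sum_const, smul_eq_mul, mul_one]
      _ ≤ ∑ u ∈ Finset.univ.filter (fun u => v ≠ u ∧ Odd (μ v u)), μ v u := by
          apply Finset.sum_le_sum
          intro u hu
          rw [Finset.mem_filter] at hu
          exact hu.2.2.pos
      _ ≤ ∑ u ∈ Finset.univ.filter (fun u => ¬ u = v), μ v u := by
          apply Finset.sum_le_sum_of_subset
          intro u hu
          rw [Finset.mem_filter] at hu ⊢
          exact ⟨hu.1, fun h => hu.2.1 h.symm⟩
      _ = _ := hfiber
      _ ≤ n := by omega
end
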